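/- Let 0 < χ < 1 and let ν : ℝ → [0,∞) be a probability density with finite second moment which is a weak stationary state of the rescaled one-dimensional modified Keller–Segel equation, i.e., for every twice continuously differentiable test function φ with bounded, Lipschitz derivative, ∫_ℝ φ''(x) ν(x) dx = χ ∬_{ℝ×ℝ} ((φ'(x) − φ'(y))/(x − y)) ν(x)ν(y) dx dy + ∫_ℝ φ'(x) x ν(x) dx, with the quotient understood as φ''(x) when x = y. Then the second moment of ν equals 1 − χ: ∫_ℝ x² ν(x) dx = 1 − χ. -/

import Mathlib

open MeasureTheory Real
open Filter Topology


lemma myHasDerivAt_tanh (x : ℝ) : HasDerivAt Real.tanh (1 / Real.cosh x ^ 2) x := by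
  have h := (Real.hasDerivAt_sinh x).div (Real.hasDerivAt_cosh x) (Real.cosh_pos x).ne'
  have heq : (Real.cosh x * Real.cosh x - Real.sinh x * Real.sinh x) / Real.cosh x ^ 2
      = 1 / Real.cosh x ^ 2 := by
    have h2 : Real.cosh x ^ 2 = Real.sinh x ^ 2 + 1 := Real.cosh_sq x
    have : Real.cosh x * Real.cosh x - Real.sinh x * Real.sinh x = 1 := by nlinarith
    rw [this]
  have hfun : Real.tanh = fun y => Real.sinh y / Real.cosh y := by
    funext y; exact Real.tanh_eq_sinh_div_cosh y
  rw [hfun]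
  rw [heq] at h; exact h

lemma abs_tanh_le_one (x : ℝ) : |Real.tanh x| ≤ 1 := by
  rw [Real.tanh_eq_sinh_div_cosh, abs_div, abs_of_pos (Real.cosh_pos x),
    div_le_one (Real.cosh_pos x)]
  rw [abs_le]
  constructor
  · have := Real.sinh_lt_cosh (-x)
    rw [Real.sinh_neg, Real.cosh_neg] at this; linarith
  · exact (Real.sinh_lt_cosh x).le

lemma inv_cosh_sq_le_one (x : ℝ) : |1 / Real.cosh x ^ 2| ≤ 1 := by
  have h1 : (1:ℝ) ≤ Real.cosh x := Real.one_le_cosh x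
  have : (1:ℝ) ≤ Real.cosh x ^ 2 := by nlinarith
  rw [abs_of_pos (by positivity)]
  rw [div_le_one (by positivity)]; exact this

lemma lipschitz_tanh : LipschitzWith 1 Real.tanh := by
  apply lipschitzWith_of_nnnorm_deriv_le
  · exact fun x => (myHasDerivAt_tanh x).differentiableAt
  · intro x
    rw [(myHasDerivAt_tanh x).deriv]
    rw [← NNReal.coe_le_coe]
    have := inv_cosh_sq_le_one x
    rw [abs_of_pos (by positivity)] at this
    simpa [Real.norm_eq_abs, abs_of_pos (show (0:ℝ) < (Real.cosh x ^2)⁻¹ by positivity)] using this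

lemma abs_tanh_le_abs (x : ℝ) : |Real.tanh x| ≤ |x| := by
  have := lipschitz_tanh.dist_le_mul x 0
  simpa [Real.dist_eq, Real.tanh_zero] using this

noncomputable def ksPhi (R : ℝ) (x : ℝ) : ℝ := R ^ 2 * Real.log (Real.cosh (x / R))

lemma ksPhi_hasDerivAt (R : ℝ) (hR : R ≠ 0) (x : ℝ) :
    HasDerivAt (ksPhi R) (R * Real.tanh (x / R)) x := by
  have h1 : HasDerivAt (fun y : ℝ => y / R) (1 / R) x := by
    simpa using (hasDerivAt_id x).div_const R
  have h3 : HasDerivAt (fun y : ℝ => Real.cosh (y / R)) (Real.sinh (x / R) * (1 / R)) x :=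
    by have := (Real.hasDerivAt_cosh (x / R)).comp x h1; exact this
  have h4 : HasDerivAt (fun y : ℝ => Real.log (Real.cosh (y / R)))
      ((Real.cosh (x / R))⁻¹ * (Real.sinh (x / R) * (1 / R))) x :=
    by have := (Real.hasDerivAt_log (Real.cosh_pos (x / R)).ne').comp x h3; exact this
  have h5 := h4.const_mul (R ^ 2)
  refine h5.congr_deriv ?_
  rw [Real.tanh_eq_sinh_div_cosh]
  field_simp

lemma ksPhi_deriv (R : ℝ) (hR : R ≠ 0) :
    deriv (ksPhi R) = fun x => R * Real.tanh (x / R) :=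
  funext fun x => (ksPhi_hasDerivAt R hR x).deriv

lemma ksPhi_hasDerivAt2 (R : ℝ) (hR : R ≠ 0) (x : ℝ) :
    HasDerivAt (fun y => R * Real.tanh (y / R)) (1 / Real.cosh (x / R) ^ 2) x := by
  have h1 : HasDerivAt (fun y : ℝ => y / R) (1 / R) x := by
    simpa using (hasDerivAt_id x).div_const R
  have h2 : HasDerivAt (fun y : ℝ => Real.tanh (y / R))
      (1 / Real.cosh (x / R) ^ 2 * (1 / R)) x :=
    by have := (myHasDerivAt_tanh (x / R)).comp x h1; exact this
  have h3 := h2.const_mul R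
  refine h3.congr_deriv ?_
  field_simp

lemma ksPhi_deriv2 (R : ℝ) (hR : R ≠ 0) :
    deriv (deriv (ksPhi R)) = fun x => 1 / Real.cosh (x / R) ^ 2 := by
  rw [ksPhi_deriv R hR]
  exact funext fun x => (ksPhi_hasDerivAt2 R hR x).deriv

lemma ksPhi_contDiff (R : ℝ) : ContDiff ℝ 2 (ksPhi R) := by
  have h : ContDiff ℝ 2 (fun x : ℝ => Real.log (Real.cosh (x / R))) :=
    ContDiff.log (Real.contDiff_cosh.comp (contDiff_id.div_const R))
      (fun x => (Real.cosh_pos _).ne')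
  exact contDiff_const.mul h


lemma continuous_tanh' : Continuous Real.tanh := by
  have : Real.tanh = fun y => Real.sinh y / Real.cosh y := by
    funext y; exact Real.tanh_eq_sinh_div_cosh y
  rw [this]
  exact Real.continuous_sinh.div Real.continuous_cosh fun x => (Real.cosh_pos x).ne'

lemma tendsto_div_natSucc (x : ℝ) :
    Tendsto (fun n : ℕ => x / ((n : ℝ) + 1)) atTop (𝓝 0) := by
  have h := tendsto_one_div_add_atTop_nhds_zero_nat.const_mul x
  rw [mul_zero] at h
  refine h.congr fun n => ?_
  rw [mul_one_div]

lemma tendsto_scaled_tanh (x : ℝ) :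
    Tendsto (fun n : ℕ => ((n : ℝ) + 1) * Real.tanh (x / ((n : ℝ) + 1))) atTop (𝓝 x) := by
  rcases eq_or_ne x 0 with rfl | hx
  · simpa [Real.tanh_zero] using (tendsto_const_nhds : Tendsto (fun _ : ℕ => (0:ℝ)) atTop (𝓝 0))
  · have hslope : Tendsto (fun t : ℝ => Real.tanh t / t) (𝓝[≠] (0:ℝ)) (𝓝 1) := by
      have h := myHasDerivAt_tanh 0
      rw [hasDerivAt_iff_tendsto_slope] at h
      simp only [Real.cosh_zero, one_pow, div_one] at h
      refine h.congr' ?_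
      filter_upwards [self_mem_nhdsWithin] with t ht
      rw [slope_def_field, Real.tanh_zero, sub_zero, sub_zero]
    have harg : Tendsto (fun n : ℕ => x / ((n : ℝ) + 1)) atTop (𝓝[≠] (0:ℝ)) := by
      refine tendsto_nhdsWithin_of_tendsto_nhds_of_eventually_within _
        (tendsto_div_natSucc x) ?_
      filter_upwards with n
      exact div_ne_zero hx (by positivity)
    have h2 := (hslope.comp harg).const_mul x
    rw [mul_one] at h2
    refine h2.congr fun n => ?_
    have hn : ((n : ℝ) + 1) ≠ 0 := by positivity
    simp only [Function.comp]
    field_simp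

lemma tendsto_inv_cosh_sq (x : ℝ) :
    Tendsto (fun n : ℕ => 1 / Real.cosh (x / ((n : ℝ) + 1)) ^ 2) atTop (𝓝 1) := by
  have h0 := tendsto_div_natSucc x
  have h1 : Tendsto (fun n : ℕ => Real.cosh (x / ((n : ℝ) + 1))) atTop (𝓝 1) := by
    have := (Real.continuous_cosh.tendsto 0).comp h0
    rw [Real.cosh_zero] at this; exact this
  have h2 := (tendsto_const_nhds (x := (1 : ℝ))).div (h1.pow 2) (by norm_num)
  rw [show (1:ℝ)/1^2 = 1 by norm_num] at h2
  exact h2.congr fun n => rfl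


/-- A weak stationary state of the rescaled one-dimensional modified
Keller–Segel equation with subcritical parameter `0 < χ < 1` has second moment
exactly `1 − χ`. The weak formulation is tested against `C²` functions `φ`
with bounded Lipschitz derivative, with the symmetrized difference quotient
`(φ'(x) − φ'(y))/(x − y)` read as `φ''(x)` on the diagonal. -/
theorem second_moment_of_stationary_state (χ : ℝ) (hχ0 : 0 < χ) (hχ1 : χ < 1)
    (ν : ℝ → ℝ) (hν0 : ∀ x, 0 ≤ ν x)
    (hmass : (∫ x : ℝ, ν x) = 1)
    (hmom2 : Integrable (fun x : ℝ => x ^ 2 * ν x))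
    (hstat : ∀ φ : ℝ → ℝ, ContDiff ℝ 2 φ →
      (∃ C : ℝ, ∀ x, |deriv φ x| ≤ C) →
      (∃ L : NNReal, LipschitzWith L (deriv φ)) →
      (∫ x : ℝ, deriv (deriv φ) x * ν x) =
        χ * (∫ p : ℝ × ℝ,
          (if p.1 = p.2 then deriv (deriv φ) p.1
            else (deriv φ p.1 - deriv φ p.2) / (p.1 - p.2)) * ν p.1 * ν p.2) +
          ∫ x : ℝ, deriv φ x * x * ν x) :
    (∫ x : ℝ, x ^ 2 * ν x) = 1 - χ := by
  have hν_int : Integrable ν := by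
    by_contra h
    rw [integral_undef h] at hmass
    norm_num at hmass
  -- the stationarity identity for the family of test functions
  have key : ∀ n : ℕ,
      (∫ x : ℝ, (1 / Real.cosh (x / ((n:ℝ)+1)) ^ 2) * ν x) =
        χ * (∫ p : ℝ × ℝ,
          (if p.1 = p.2 then 1 / Real.cosh (p.1 / ((n:ℝ)+1)) ^ 2
            else (((n:ℝ)+1) * Real.tanh (p.1 / ((n:ℝ)+1))
                - ((n:ℝ)+1) * Real.tanh (p.2 / ((n:ℝ)+1))) / (p.1 - p.2))
            * ν p.1 * ν p.2) +
          ∫ x : ℝ, (((n:ℝ)+1) * Real.tanh (x / ((n:ℝ)+1))) * x * ν x := by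
    intro n
    set R : ℝ := (n:ℝ) + 1 with hRdef
    have hR : R ≠ 0 := by positivity
    have hbnd : ∃ C : ℝ, ∀ x, |deriv (ksPhi R) x| ≤ C := by
      refine ⟨|R|, fun x => ?_⟩
      rw [ksPhi_deriv R hR]
      calc |R * Real.tanh (x / R)| = |R| * |Real.tanh (x / R)| := abs_mul _ _
        _ ≤ |R| * 1 := by
            exact mul_le_mul_of_nonneg_left (abs_tanh_le_one _) (abs_nonneg _)
        _ = |R| := mul_one _
    have hlip : ∃ L : NNReal, LipschitzWith L (deriv (ksPhi R)) := by
      refine ⟨1, ?_⟩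
      rw [ksPhi_deriv R hR]
      apply lipschitzWith_of_nnnorm_deriv_le
        (fun x => (ksPhi_hasDerivAt2 R hR x).differentiableAt)
      intro x
      rw [(ksPhi_hasDerivAt2 R hR x).deriv, ← NNReal.coe_le_coe]
      have h1 := inv_cosh_sq_le_one (x / R)
      rw [abs_of_pos (by positivity)] at h1
      simpa [Real.norm_eq_abs, one_div] using h1
    have h := hstat (ksPhi R) (ksPhi_contDiff R) hbnd hlip
    rw [ksPhi_deriv2 R hR, ksPhi_deriv R hR] at h
    simpa using h
  -- Limit A : second-derivative term tends to the total mass 1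
  have hA : Tendsto (fun n : ℕ => ∫ x : ℝ, (1 / Real.cosh (x / ((n:ℝ)+1)) ^ 2) * ν x)
      atTop (𝓝 1) := by
    have h := tendsto_integral_of_dominated_convergence (μ := volume)
      (F := fun (n : ℕ) (x : ℝ) => (1 / Real.cosh (x / ((n:ℝ)+1)) ^ 2) * ν x)
      (f := ν) (fun x => ν x)
      (fun n => (Continuous.aestronglyMeasurable
        (continuous_const.div
          ((Real.continuous_cosh.comp (continuous_id.div_const _)).pow 2)
          (fun x => pow_ne_zero 2 (Real.cosh_pos _).ne'))).mul hν_int.1)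
      hν_int
      (fun n => by
        filter_upwards with x
        rw [Real.norm_eq_abs, abs_mul, abs_of_nonneg (hν0 x)]
        exact mul_le_of_le_one_left (hν0 x) (inv_cosh_sq_le_one _))
      (by
        filter_upwards with x
        simpa using (tendsto_inv_cosh_sq x).mul_const (ν x))
    rwa [hmass] at h
  -- Limit B : drift term tends to the second moment
  have hB : Tendsto (fun n : ℕ =>
        ∫ x : ℝ, (((n:ℝ)+1) * Real.tanh (x / ((n:ℝ)+1))) * x * ν x)
      atTop (𝓝 (∫ x : ℝ, x ^ 2 * ν x)) := by
    refine tendsto_integral_of_dominated_convergence (fun x => x ^ 2 * ν x)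
      ?_ hmom2 ?_ ?_
    · intro n
      refine (Continuous.aestronglyMeasurable ?_).mul hν_int.1
      exact (continuous_const.mul
        (continuous_tanh'.comp (continuous_id.div_const _))).mul continuous_id
    · intro n
      filter_upwards with x
      rw [Real.norm_eq_abs]
      have hn : (0:ℝ) < (n:ℝ) + 1 := by positivity
      have htl : |((n:ℝ)+1) * Real.tanh (x / ((n:ℝ)+1))| ≤ |x| := by
        rw [abs_mul, abs_of_pos hn]
        calc ((n:ℝ)+1) * |Real.tanh (x / ((n:ℝ)+1))|
            ≤ ((n:ℝ)+1) * |x / ((n:ℝ)+1)| :=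
              mul_le_mul_of_nonneg_left (abs_tanh_le_abs _) hn.le
          _ = |x| := by
              rw [abs_div, abs_of_pos hn]
              field_simp
      calc |(((n:ℝ)+1) * Real.tanh (x / ((n:ℝ)+1))) * x * ν x|
          = |((n:ℝ)+1) * Real.tanh (x / ((n:ℝ)+1))| * |x| * ν x := by
            rw [abs_mul, abs_mul, abs_of_nonneg (hν0 x)]
        _ ≤ |x| * |x| * ν x :=
            mul_le_mul_of_nonneg_right
              (mul_le_mul_of_nonneg_right htl (abs_nonneg x)) (hν0 x)
        _ = x ^ 2 * ν x := by rw [abs_mul_abs_self]; ring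
    · filter_upwards with x
      have h := ((tendsto_scaled_tanh x).mul_const x).mul_const (ν x)
      have hx2 : x * x * ν x = x ^ 2 * ν x := by ring
      rwa [hx2] at h
  -- Limit C : interaction term tends to 1
  have hvol : (volume : Measure (ℝ × ℝ)) = (volume : Measure ℝ).prod volume :=
    Measure.volume_eq_prod ℝ ℝ
  have hC : Tendsto (fun n : ℕ => ∫ p : ℝ × ℝ,
      (if p.1 = p.2 then 1 / Real.cosh (p.1 / ((n:ℝ)+1)) ^ 2
        else (((n:ℝ)+1) * Real.tanh (p.1 / ((n:ℝ)+1))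
            - ((n:ℝ)+1) * Real.tanh (p.2 / ((n:ℝ)+1))) / (p.1 - p.2))
        * ν p.1 * ν p.2) atTop (𝓝 1) := by
    have hprod : Integrable (fun p : ℝ × ℝ => ν p.1 * ν p.2) := by
      rw [hvol]
      exact hν_int.mul_prod hν_int
    have hlim1 : (∫ p : ℝ × ℝ, ν p.1 * ν p.2) = 1 := by
      rw [hvol, integral_prod_mul, hmass, mul_one]
    have hfst : AEStronglyMeasurable (fun p : ℝ × ℝ => ν p.1) volume := by
      rw [hvol]; exact hν_int.1.comp_fst
    have hsnd : AEStronglyMeasurable (fun p : ℝ × ℝ => ν p.2) volume := by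
      rw [hvol]; exact hν_int.1.comp_snd
    suffices h : Tendsto (fun n : ℕ => ∫ p : ℝ × ℝ,
        (if p.1 = p.2 then 1 / Real.cosh (p.1 / ((n:ℝ)+1)) ^ 2
        else (((n:ℝ)+1) * Real.tanh (p.1 / ((n:ℝ)+1))
            - ((n:ℝ)+1) * Real.tanh (p.2 / ((n:ℝ)+1))) / (p.1 - p.2))
        * ν p.1 * ν p.2) atTop (𝓝 (∫ p : ℝ × ℝ, ν p.1 * ν p.2)) by
      rwa [hlim1] at h
    refine tendsto_integral_of_dominated_convergence
      (fun p : ℝ × ℝ => ν p.1 * ν p.2) ?_ hprod ?_ ?_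
    · intro n
      have hKmeas : Measurable (fun p : ℝ × ℝ =>
          (if p.1 = p.2 then 1 / Real.cosh (p.1 / ((n:ℝ)+1)) ^ 2
            else (((n:ℝ)+1) * Real.tanh (p.1 / ((n:ℝ)+1))
                - ((n:ℝ)+1) * Real.tanh (p.2 / ((n:ℝ)+1))) / (p.1 - p.2))) := by
        refine Measurable.ite
          (isClosed_eq continuous_fst continuous_snd).measurableSet ?_ ?_
        · exact (continuous_const.div
            ((Real.continuous_cosh.comp (continuous_fst.div_const _)).pow 2)
            (fun p => pow_ne_zero 2 (Real.cosh_pos _).ne')).measurable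
        · exact Measurable.div
            (((continuous_const.mul
                (continuous_tanh'.comp (continuous_fst.div_const _))).sub
              (continuous_const.mul
                (continuous_tanh'.comp (continuous_snd.div_const _)))).measurable)
            ((continuous_fst.sub continuous_snd).measurable)
      exact (hKmeas.aestronglyMeasurable.mul hfst).mul hsnd
    · intro n
      filter_upwards with p
      rw [Real.norm_eq_abs, abs_mul, abs_mul, abs_of_nonneg (hν0 p.1),
        abs_of_nonneg (hν0 p.2)]
      have hK1 : |(if p.1 = p.2 then 1 / Real.cosh (p.1 / ((n:ℝ)+1)) ^ 2
          else (((n:ℝ)+1) * Real.tanh (p.1 / ((n:ℝ)+1))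
              - ((n:ℝ)+1) * Real.tanh (p.2 / ((n:ℝ)+1))) / (p.1 - p.2))| ≤ 1 := by
        by_cases h : p.1 = p.2
        · rw [if_pos h]; exact inv_cosh_sq_le_one _
        · rw [if_neg h, abs_div, div_le_one (abs_pos.mpr (sub_ne_zero.mpr h))]
          have hn : (0:ℝ) < (n:ℝ)+1 := by positivity
          have hlp := lipschitz_tanh.dist_le_mul
            (p.1 / ((n:ℝ)+1)) (p.2 / ((n:ℝ)+1))
          rw [Real.dist_eq, Real.dist_eq] at hlp
          calc |((n:ℝ)+1) * Real.tanh (p.1 / ((n:ℝ)+1))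
                - ((n:ℝ)+1) * Real.tanh (p.2 / ((n:ℝ)+1))|
              = ((n:ℝ)+1) * |Real.tanh (p.1 / ((n:ℝ)+1))
                  - Real.tanh (p.2 / ((n:ℝ)+1))| := by
                rw [← mul_sub, abs_mul, abs_of_pos hn]
            _ ≤ ((n:ℝ)+1) * |p.1 / ((n:ℝ)+1) - p.2 / ((n:ℝ)+1)| :=
                mul_le_mul_of_nonneg_left (by simpa using hlp) hn.le
            _ = |p.1 - p.2| := by
                rw [div_sub_div_same, abs_div, abs_of_pos hn]
                field_simp
      calc |(if p.1 = p.2 then 1 / Real.cosh (p.1 / ((n:ℝ)+1)) ^ 2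
            else (((n:ℝ)+1) * Real.tanh (p.1 / ((n:ℝ)+1))
                - ((n:ℝ)+1) * Real.tanh (p.2 / ((n:ℝ)+1))) / (p.1 - p.2))|
            * ν p.1 * ν p.2
          ≤ 1 * ν p.1 * ν p.2 :=
            mul_le_mul_of_nonneg_right
              (mul_le_mul_of_nonneg_right hK1 (hν0 p.1)) (hν0 p.2)
        _ = ν p.1 * ν p.2 := by ring
    · filter_upwards with p
      have hKlim : Tendsto (fun n : ℕ =>
          (if p.1 = p.2 then 1 / Real.cosh (p.1 / ((n:ℝ)+1)) ^ 2
            else (((n:ℝ)+1) * Real.tanh (p.1 / ((n:ℝ)+1))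
                - ((n:ℝ)+1) * Real.tanh (p.2 / ((n:ℝ)+1))) / (p.1 - p.2)))
          atTop (𝓝 1) := by
        by_cases h : p.1 = p.2
        · simp only [if_pos h]
          exact tendsto_inv_cosh_sq _
        · simp only [if_neg h]
          have h2 := ((tendsto_scaled_tanh p.1).sub (tendsto_scaled_tanh p.2)).div_const
            (p.1 - p.2)
          rwa [div_self (sub_ne_zero.mpr h)] at h2
      simpa using (hKlim.mul_const (ν p.1)).mul_const (ν p.2)
  -- Pass to the limit in the stationarity identity
  have hRHS := (hC.const_mul χ).add hB
  have hA' := hRHS.congr fun n => (key n).symm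
  have hfin := tendsto_nhds_unique hA hA'
  rw [mul_one] at hfin
  linarith
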